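/- Let f : {0,1}^ñ × {0,1}^t → {0,1}^ℓ̃ be a strong k →_ε k' condenser, let Σ := {0,1}^ℓ̃, and let C ⊆ Σ^{2^t} be the code induced by f. Then for every mixture S over Σ^{2^t}, |LIST_C(S, ρ(S)·2^{ℓ̃−k'} + ε)| < 2^k. -/

import Mathlib

/-- Statistical distance between two distributions on a finite set. -/
noncomputable def statDist {Ω : Type*} [Fintype Ω] (p q : Ω → ℝ) : ℝ :=
  (∑ x, |p x - q x|) / 2

/-- `p` is a probability distribution on a finite set. -/
def IsDist {Ω : Type*} [Fintype Ω] (p : Ω → ℝ) : Prop :=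
  (∀ x, 0 ≤ p x) ∧ (∑ x, p x) = 1

/-- `p` has min-entropy at least `b` (bits). -/
def minEntropyGe {Ω : Type*} [Fintype Ω] (p : Ω → ℝ) (b : ℝ) : Prop :=
  ∀ x, p x ≤ (2 : ℝ) ^ (-b)

/-- Joint distribution of `(Z, f(X, Z))` where `X ∼ p` and `Z` is uniform. -/
noncomputable def jointDist {A S B : Type*} [Fintype A] [Fintype S] [DecidableEq B]
    (p : A → ℝ) (f : A → S → B) : S × B → ℝ :=
  fun sb => (Fintype.card S : ℝ)⁻¹ * ∑ x, if f x sb.1 = sb.2 then p x else 0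

/-- Strong `k →_ε k'` condenser. -/
def IsStrongCondenser {A S B : Type*} [Fintype A] [Fintype S] [Fintype B] [DecidableEq B]
    (f : A → S → B) (k k' ε : ℝ) : Prop :=
  ∀ p : A → ℝ, IsDist p → minEntropyGe p k →
    ∃ q : S × B → ℝ, IsDist q ∧
      minEntropyGe q (Real.logb 2 (Fintype.card S) + k') ∧
      statDist (jointDist p f) q ≤ ε

/-- `ρ(S)`: expected agreement of a uniformly random word with the mixture `S`. -/
noncomputable def rhoMix {t ℓt : ℕ} (S : (Fin t → Bool) → Finset (Fin ℓt → Bool)) : ℝ :=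
  (∑ y, ((S y).card : ℝ)) / ((2 : ℝ) ^ t * (2 : ℝ) ^ ℓt)

lemma event_bound {Ω : Type*} [Fintype Ω] (p q : Ω → ℝ)
    (hp : ∑ x, p x = 1) (hq : ∑ x, q x = 1) (E : Ω → Prop) [DecidablePred E] :
    |∑ x, (if E x then p x - q x else 0)| ≤ statDist p q := by
  set s := ∑ x, (if E x then p x - q x else 0) with hs
  have hsum0 : s + ∑ x, (if E x then 0 else p x - q x) = 0 := by
    rw [hs, ← Finset.sum_add_distrib]
    have : ∀ x, (if E x then p x - q x else 0) + (if E x then 0 else p x - q x) = p x - q x := by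
      intro x; by_cases h : E x <;> simp [h]
    simp only [this]
    rw [Finset.sum_sub_distrib, hp, hq]; ring
  have h1 : |s| ≤ ∑ x, (if E x then |p x - q x| else 0) := by
    refine le_trans (Finset.abs_sum_le_sum_abs _ _) (Finset.sum_le_sum ?_)
    intro x _; by_cases h : E x <;> simp [h]
  have h2 : |∑ x, (if E x then 0 else p x - q x)| ≤ ∑ x, (if E x then 0 else |p x - q x|) := by
    refine le_trans (Finset.abs_sum_le_sum_abs _ _) (Finset.sum_le_sum ?_)
    intro x _; by_cases h : E x <;> simp [h]
  have h3 : (∑ x, (if E x then |p x - q x| else 0)) + ∑ x, (if E x then 0 else |p x - q x|)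
      = ∑ x, |p x - q x| := by
    rw [← Finset.sum_add_distrib]
    refine Finset.sum_congr rfl ?_
    intro x _; by_cases h : E x <;> simp [h]
  have hneg : ∑ x, (if E x then 0 else p x - q x) = -s := by linarith
  rw [hneg, abs_neg] at h2
  rw [statDist]; linarith

open Classical in
/-- Agreement list-size bound for codes induced by strong condensers. -/
theorem stmt10 (nt t ℓt : ℕ)
    (f : (Fin nt → Bool) → (Fin t → Bool) → Fin ℓt → Bool)
    (k k' ε : ℝ) (hf : IsStrongCondenser f k k' ε)
    (S : (Fin t → Bool) → Finset (Fin ℓt → Bool)) (hS : ∀ y, (S y).Nonempty) :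
    (((Finset.univ.image (fun x : Fin nt → Bool => fun y => f x y)).filter
        (fun c : (Fin t → Bool) → Fin ℓt → Bool =>
          (rhoMix S * (2 : ℝ) ^ ((ℓt : ℝ) - k') + ε) * 2 ^ t <
            ((Finset.univ.filter (fun y => c y ∈ S y)).card : ℝ))).card : ℝ) <
      (2 : ℝ) ^ k := by
  by_contra hcon
  push_neg at hcon
  set α : ℝ := rhoMix S * (2 : ℝ) ^ ((ℓt : ℝ) - k') + ε with hα
  set L := ((Finset.univ.image (fun x : Fin nt → Bool => fun y => f x y)).filter
        (fun c : (Fin t → Bool) → Fin ℓt → Bool =>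
          α * 2 ^ t < ((Finset.univ.filter (fun y => c y ∈ S y)).card : ℝ))) with hL
  set T := (Finset.univ : Finset (Fin nt → Bool)).filter
      (fun x => α * 2 ^ t < ((Finset.univ.filter (fun y => f x y ∈ S y)).card : ℝ)) with hT
  have hLsub : L ⊆ T.image (fun x : Fin nt → Bool => fun y => f x y) := by
    intro c hc
    rw [hL, Finset.mem_filter, Finset.mem_image] at hc
    obtain ⟨⟨x, _, hx⟩, hcond⟩ := hc
    refine Finset.mem_image.2 ⟨x, ?_, hx⟩
    rw [hT, Finset.mem_filter]
    exact ⟨Finset.mem_univ _, by subst hx; exact hcond⟩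
  have hcardLT : (L.card : ℝ) ≤ (T.card : ℝ) := by
    exact_mod_cast le_trans (Finset.card_le_card hLsub) (Finset.card_image_le)
  have hTk : (2 : ℝ) ^ k ≤ (T.card : ℝ) := le_trans hcon hcardLT
  have hTpos : (0 : ℝ) < (T.card : ℝ) := lt_of_lt_of_le (Real.rpow_pos_of_pos two_pos k) hTk
  have hTposn : 0 < T.card := by exact_mod_cast hTpos
  have hTne : T.Nonempty := Finset.card_pos.mp hTposn
  set p : (Fin nt → Bool) → ℝ := fun x => if x ∈ T then (T.card : ℝ)⁻¹ else 0 with hp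
  have hpd : IsDist p := by
    constructor
    · intro x; rw [hp]; dsimp only; split <;> positivity
    · rw [hp]; simp only
      rw [Finset.sum_ite_mem, Finset.univ_inter, Finset.sum_const, nsmul_eq_mul]
      exact mul_inv_cancel₀ (by exact_mod_cast hTposn.ne')
  have hpme : minEntropyGe p k := by
    intro x
    rw [hp]; dsimp only
    have h2 : (2 : ℝ) ^ (-k) = ((2 : ℝ) ^ k)⁻¹ := by
      rw [Real.rpow_neg (by norm_num)]
    split
    · rw [h2]; exact inv_anti₀ (Real.rpow_pos_of_pos two_pos k) hTk
    · positivity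
  obtain ⟨q, hqd, hqme, hqsd⟩ := hf p hpd hpme
  have hcardSd : (Fintype.card (Fin t → Bool)) = 2 ^ t := by
    simp [Fintype.card_fun]
  have hcardSdR : ((Fintype.card (Fin t → Bool)) : ℝ) = (2 : ℝ) ^ t := by
    rw [hcardSd]; push_cast; ring
  have h2tpos : (0 : ℝ) < (2 : ℝ) ^ t := by positivity
  set P : (((Fin t → Bool) × (Fin ℓt → Bool)) → ℝ) → ℝ :=
    fun r => ∑ zb : (Fin t → Bool) × (Fin ℓt → Bool), if zb.2 ∈ S zb.1 then r zb else 0 with hP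
  -- inner sum computation
  have hinner : ∀ (g : (Fin nt → Bool) → ℝ) (z : Fin t → Bool),
      (∑ b : Fin ℓt → Bool, if b ∈ S z then (∑ x, if f x z = b then g x else 0) else 0)
      = ∑ x, if f x z ∈ S z then g x else 0 := by
    intro g z
    have step1 : ∀ b : Fin ℓt → Bool,
        (if b ∈ S z then ∑ x, if f x z = b then g x else 0 else 0)
        = ∑ x, if b ∈ S z ∧ f x z = b then g x else 0 := by
      intro b; by_cases h : b ∈ S z <;> simp [h]
    simp only [step1]
    rw [Finset.sum_comm]
    refine Finset.sum_congr rfl fun x _ => ?_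
    by_cases h : f x z ∈ S z
    · have : ∀ b : Fin ℓt → Bool, (if b ∈ S z ∧ f x z = b then g x else 0)
          = if b = f x z then g x else 0 := by
        intro b
        by_cases hb : b = f x z
        · subst hb; simp [h]
        · rw [if_neg (fun hc : b ∈ S z ∧ f x z = b => hb hc.2.symm), if_neg hb]
      simp only [this, Finset.sum_ite_eq' Finset.univ (f x z) (fun _ => g x)]
      simp [h]
    · rw [if_neg h]
      refine Finset.sum_eq_zero fun b _ => ?_
      by_cases hb : f x z = b
      · subst hb; simp [h]
      · simp [hb]
  -- P of a joint distribution
  have hPjd : ∀ g : (Fin nt → Bool) → ℝ, P (jointDist g f)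
      = ((2 : ℝ) ^ t)⁻¹ * ∑ x, g x * ((Finset.univ.filter (fun y => f x y ∈ S y)).card : ℝ) := by
    intro g
    rw [hP]; dsimp only
    rw [Fintype.sum_prod_type]
    simp only [jointDist, hcardSdR]
    have step : ∀ (z : Fin t → Bool) (b : Fin ℓt → Bool),
        (if b ∈ S z then ((2:ℝ)^t)⁻¹ * ∑ x, (if f x z = b then g x else 0) else 0)
        = ((2:ℝ)^t)⁻¹ * (if b ∈ S z then ∑ x, (if f x z = b then g x else 0) else 0) := by
      intro z b; split <;> simp
    simp only [step, ← Finset.mul_sum]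
    congr 1
    simp only [hinner g]
    rw [Finset.sum_comm]
    refine Finset.sum_congr rfl fun x _ => ?_
    rw [← Finset.sum_filter, Finset.sum_const, nsmul_eq_mul, mul_comm]
  -- jointDist p f sums to 1
  have hjd1 : ∑ zb : (Fin t → Bool) × (Fin ℓt → Bool), jointDist p f zb = 1 := by
    rw [Fintype.sum_prod_type]
    simp only [jointDist, hcardSdR, ← Finset.mul_sum]
    have : ∀ z : Fin t → Bool, (∑ b : Fin ℓt → Bool, ∑ x, if f x z = b then p x else 0)
        = ∑ x, p x := by
      intro z
      rw [Finset.sum_comm]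
      refine Finset.sum_congr rfl fun x _ => ?_
      rw [Finset.sum_ite_eq Finset.univ (f x z) (fun _ => p x)]
      simp
    simp only [this, hpd.2, mul_one]
    rw [Finset.sum_const, Finset.card_univ, nsmul_eq_mul, hcardSdR]
    rw [mul_one]; exact inv_mul_cancel₀ h2tpos.ne'
  -- lower bound
  have hlow : α < P (jointDist p f) := by
    rw [hPjd p]
    have hs : ∑ x, p x * ((Finset.univ.filter (fun y => f x y ∈ S y)).card : ℝ)
        = ∑ x ∈ T, (T.card : ℝ)⁻¹ * ((Finset.univ.filter (fun y => f x y ∈ S y)).card : ℝ) := by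
      rw [hp]
      simp only [ite_mul, zero_mul]
      rw [Finset.sum_ite_mem, Finset.univ_inter]
    rw [hs]
    have hstrict : ∑ x ∈ T, (T.card : ℝ)⁻¹ * (α * 2 ^ t)
        < ∑ x ∈ T, (T.card : ℝ)⁻¹ * ((Finset.univ.filter (fun y => f x y ∈ S y)).card : ℝ) := by
      refine Finset.sum_lt_sum_of_nonempty hTne fun x hx => ?_
      rw [hT, Finset.mem_filter] at hx
      exact mul_lt_mul_of_pos_left hx.2 (inv_pos.mpr hTpos)
    have hconst : ∑ x ∈ T, (T.card : ℝ)⁻¹ * (α * 2 ^ t) = α * 2 ^ t := by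
      rw [Finset.sum_const, nsmul_eq_mul, ← mul_assoc, mul_inv_cancel₀ hTpos.ne', one_mul]
    rw [hconst] at hstrict
    have hid : ((2:ℝ)^t)⁻¹ * (α * 2 ^ t) = α := by
      rw [mul_comm α, ← mul_assoc, inv_mul_cancel₀ h2tpos.ne', one_mul]
    calc α = ((2:ℝ)^t)⁻¹ * (α * 2 ^ t) := hid.symm
    _ < _ := mul_lt_mul_of_pos_left hstrict (inv_pos.mpr h2tpos)
  -- upper bound on P q
  have hM : (2 : ℝ) ^ (-(Real.logb 2 ((Fintype.card (Fin t → Bool)) : ℝ) + k'))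
      = ((2 : ℝ) ^ t)⁻¹ * (2 : ℝ) ^ (-k') := by
    rw [hcardSdR, ← Real.rpow_natCast 2 t, Real.logb_rpow two_pos (by norm_num), neg_add,
      Real.rpow_add two_pos, Real.rpow_neg (by norm_num), Real.rpow_natCast]
  have hup : P q ≤ rhoMix S * (2 : ℝ) ^ ((ℓt : ℝ) - k') := by
    have h1 : P q ≤ ∑ zb : (Fin t → Bool) × (Fin ℓt → Bool),
        (if zb.2 ∈ S zb.1 then ((2 : ℝ) ^ t)⁻¹ * (2 : ℝ) ^ (-k') else 0) := by
      rw [hP]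
      refine Finset.sum_le_sum fun zb _ => ?_
      split
      · rw [← hM]; exact hqme zb
      · positivity
    have h2 : (∑ zb : (Fin t → Bool) × (Fin ℓt → Bool),
        (if zb.2 ∈ S zb.1 then ((2 : ℝ) ^ t)⁻¹ * (2 : ℝ) ^ (-k') else 0))
        = (∑ z, ((S z).card : ℝ)) * (((2 : ℝ) ^ t)⁻¹ * (2 : ℝ) ^ (-k')) := by
      rw [Fintype.sum_prod_type, Finset.sum_mul]
      refine Finset.sum_congr rfl fun z _ => ?_
      dsimp only
      rw [Finset.sum_ite_mem, Finset.univ_inter, Finset.sum_const, nsmul_eq_mul]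
    have h3 : (∑ z, ((S z).card : ℝ)) * (((2 : ℝ) ^ t)⁻¹ * (2 : ℝ) ^ (-k'))
        = rhoMix S * (2 : ℝ) ^ ((ℓt : ℝ) - k') := by
      rw [rhoMix, Real.rpow_sub two_pos, Real.rpow_neg (by norm_num),
        Real.rpow_natCast]
      have h2l : ((2:ℝ)^ℓt) ≠ 0 := by positivity
      have h2k : ((2:ℝ)^k') ≠ 0 := by positivity
      field_simp
    rw [h2, h3] at h1
    exact h1
  -- statistical distance bound
  have hsd : P (jointDist p f) - P q ≤ ε := by
    have heb := event_bound (jointDist p f) q hjd1 hqd.2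
      (fun zb : (Fin t → Bool) × (Fin ℓt → Bool) => zb.2 ∈ S zb.1)
    have hsplit : (∑ zb : (Fin t → Bool) × (Fin ℓt → Bool),
        (if zb.2 ∈ S zb.1 then jointDist p f zb - q zb else 0))
        = P (jointDist p f) - P q := by
      rw [hP]; dsimp only
      rw [← Finset.sum_sub_distrib]
      refine Finset.sum_congr rfl fun zb _ => ?_
      split <;> simp
    rw [hsplit] at heb
    have := le_trans heb hqsd
    exact le_trans (le_abs_self _) this
  linarith
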